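/- For every real number x with 0 < |x| < 2π, log(x/(1−e^{−x})) − x/2 = −∑_{k≥1} (B_{2k} / (2k · (2k)!)) x^{2k}, where the series on the right converges and B_{2k} denote the Bernoulli numbers. -/

import Mathlib

open Real
open Filter Finset

set_option maxHeartbeats 1600000 in
/-- For `0 < |x| < 2π`,
`log (x/(1 - e^{-x})) - x/2 = -∑_{k ≥ 1} (B_{2k} / (2k · (2k)!)) x^{2k}`, where the series
on the right converges and `B_{2k}` are the Bernoulli numbers (with the convention
`x/(e^x - 1) = ∑ B_n x^n / n!`).  The `HasSum` statement asserts both the convergence of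
the series and that its sum is `-(log (x/(1 - e^{-x})) - x/2)`. -/
theorem stmt3 (x : ℝ) (hx : 0 < |x|) (hx2 : |x| < 2 * π) :
    HasSum
      (fun k : ℕ =>
        ((bernoulli (2 * (k + 1)) : ℝ)
            / ((2 * ((k : ℝ) + 1)) * (Nat.factorial (2 * (k + 1)) : ℝ)))
          * x ^ (2 * (k + 1)))
      (-(Real.log (x / (1 - Real.exp (-x))) - x / 2)) := by
  have hπ : (0:ℝ) < π := pi_pos
  have hx0 : x ≠ 0 := abs_pos.mp hx
  set y : ℝ := x / 2 with hy_def
  have hy : y ≠ 0 := by simp [hy_def, hx0]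
  set c : ℝ := x ^ 2 / (2 * π) ^ 2 with hc_def
  have hc0 : 0 < c := by positivity
  have hc1 : c < 1 := by
    rw [hc_def, div_lt_one (by positivity)]
    calc x ^ 2 = |x| ^ 2 := (sq_abs x).symm
    _ < (2 * π) ^ 2 := by
      apply pow_lt_pow_left₀ hx2 (abs_nonneg x)
      norm_num
  set t : ℕ → ℝ := fun j => c / ((j : ℝ) + 1) ^ 2 with ht_def
  have ht0 : ∀ j, 0 < t j := fun j => by positivity
  have htc : ∀ j, t j ≤ c := by
    intro j
    rw [ht_def]
    simp only
    rw [div_le_iff₀ (by positivity)]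
    have h1 : (1:ℝ) ≤ ((j:ℝ)+1)^2 := by nlinarith [Nat.cast_nonneg (α := ℝ) j]
    nlinarith
  have ht1 : ∀ j, t j < 1 := fun j => lt_of_le_of_lt (htc j) hc1
  -- Euler product for sinh
  have hP : Filter.Tendsto (fun n : ℕ => ∏ j ∈ Finset.range n, (1 + t j)) atTop
      (nhds (Real.sinh y / y)) := by
    have h0 := Complex.tendsto_euler_sin_prod (((x / (2 * π) : ℝ) : ℂ) * Complex.I)
    have hz1 : (π : ℂ) * (((x / (2 * π) : ℝ) : ℂ) * Complex.I) = (y : ℂ) * Complex.I := by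
      rw [hy_def]
      push_cast
      have hπc : (π : ℂ) ≠ 0 := by exact_mod_cast hπ.ne'
      field_simp
    rw [hz1, Complex.sin_mul_I, ← Complex.ofReal_sinh] at h0
    have hz2 : ∀ n : ℕ, ∏ j ∈ Finset.range n,
        ((1 : ℂ) - (((x / (2 * π) : ℝ) : ℂ) * Complex.I) ^ 2 / ((j : ℂ) + 1) ^ 2)
        = ((∏ j ∈ Finset.range n, (1 + t j) : ℝ) : ℂ) := by
      intro n
      rw [Complex.ofReal_prod]
      refine Finset.prod_congr rfl fun j _ => ?_
      rw [ht_def]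
      simp only
      rw [hc_def]
      push_cast
      rw [mul_pow, Complex.I_sq]
      have hπc : (π : ℂ) ≠ 0 := by exact_mod_cast hπ.ne'
      have hjc : ((j : ℂ) + 1) ≠ 0 := Nat.cast_add_one_ne_zero j
      field_simp
      ring
    simp only [hz1, hz2] at h0
    have hyI : ((y : ℂ) * Complex.I) ≠ 0 := by
      simp [Complex.ext_iff, hy]
    have h2 := h0.const_mul (((y : ℂ) * Complex.I)⁻¹)
    have hval : (((y : ℂ) * Complex.I)⁻¹ * (((Real.sinh y : ℝ) : ℂ) * Complex.I))
        = ((Real.sinh y / y : ℝ) : ℂ) := by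
      have hyc : (y : ℂ) ≠ 0 := Complex.ofReal_ne_zero.mpr hy
      push_cast
      field_simp
    rw [hval] at h2
    have h3 := h2.congr (fun n => inv_mul_cancel_left₀ hyI _)
    have h4 := (Complex.continuous_re.tendsto _).comp h3
    simpa only [Function.comp_def, Complex.ofReal_re] using h4
  have hsy : 0 < Real.sinh y / y := by
    rcases lt_or_gt_of_ne hy with h | h
    · exact div_pos_of_neg_of_neg (by simpa using Real.sinh_lt_sinh.mpr h) h
    · exact div_pos (by simpa using Real.sinh_lt_sinh.mpr h) h
  set L : ℝ := Real.log (Real.sinh y / y) with hL_def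
  have hLsum : HasSum (fun j => Real.log (1 + t j)) L := by
    rw [hasSum_iff_tendsto_nat_of_nonneg (fun j => Real.log_nonneg (by linarith [ht0 j]))]
    have h5 := (Real.continuousAt_log hsy.ne').tendsto.comp hP
    refine h5.congr fun n => ?_
    simp only [Function.comp_def]
    rw [Real.log_prod (fun j _ => by nlinarith [ht0 j])]
  set a : ℕ × ℕ → ℝ := fun p => (-1) ^ p.2 * (t p.1) ^ (p.2 + 1) / ((p.2 : ℝ) + 1) with ha_def
  have hsa : Summable a := by
    have hst : Summable t := by
      have h6 : Summable (fun n : ℕ => 1 / (n : ℝ) ^ 2) := by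
        simpa using Real.summable_one_div_nat_pow.mpr (le_refl 2)
      have h7 := ((summable_nat_add_iff 1).mpr h6).mul_left c
      refine h7.congr fun j => ?_
      rw [ht_def]
      push_cast
      simp [div_eq_mul_inv]
    have hgeom : Summable (fun k : ℕ => c ^ k) :=
      summable_geometric_of_lt_one hc0.le hc1
    have hprod : Summable (fun p : ℕ × ℕ => t p.1 * c ^ p.2) :=
      hst.mul_of_nonneg hgeom (fun j => (ht0 j).le) (fun k => by positivity)
    refine Summable.of_norm (hprod.of_nonneg_of_le (fun p => norm_nonneg _) fun p => ?_)
    rw [ha_def]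
    simp only [norm_div, norm_mul, norm_pow, norm_neg, norm_one, one_pow, one_mul,
      Real.norm_eq_abs]
    rw [abs_of_pos (ht0 p.1), abs_of_pos (by positivity : (0:ℝ) < (p.2 : ℝ) + 1)]
    calc t p.1 ^ (p.2 + 1) / ((p.2 : ℝ) + 1) ≤ t p.1 ^ (p.2 + 1) :=
          div_le_self (by positivity) (by simp [Nat.cast_nonneg])
      _ = t p.1 * t p.1 ^ p.2 := by rw [pow_succ]; ring
      _ ≤ t p.1 * c ^ p.2 := by
          apply mul_le_mul_of_nonneg_left _ (ht0 p.1).le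
          exact pow_le_pow_left₀ (ht0 p.1).le (htc p.1) p.2
  have h1 : ∀ j : ℕ, HasSum (fun k => a (j, k)) (Real.log (1 + t j)) := by
    intro j
    have habs : |(-(t j))| < 1 := by
      rw [abs_neg, abs_of_pos (ht0 j)]; exact ht1 j
    have h8 := (Real.hasSum_pow_div_log_of_abs_lt_one habs).neg
    rw [sub_neg_eq_add, neg_neg] at h8
    refine HasSum.congr_fun h8 fun k => ?_
    rw [ha_def]
    simp only
    have hu : ∀ u : ℝ, -((-u) ^ (k + 1) / ((k : ℝ) + 1))
        = (-1) ^ k * u ^ (k + 1) / ((k : ℝ) + 1) := by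
      intro u
      rw [neg_pow, pow_succ]
      ring
    exact (hu (t j)).symm
  have hA : HasSum a L := by
    have h9 := hsa.hasSum
    have h10 := h9.prod_fiberwise h1
    rwa [h10.unique hLsum] at h9
  have hA' : HasSum (fun p : ℕ × ℕ => a (p.2, p.1)) L :=
    ((Equiv.prodComm ℕ ℕ).hasSum_iff).mpr hA
  -- zeta values over j ≥ 1
  have hz' : ∀ k : ℕ, HasSum (fun j : ℕ => 1 / ((j : ℝ) + 1) ^ (2 * (k + 1)))
      ((-1 : ℝ) ^ (k + 1 + 1) * (2 : ℝ) ^ (2 * (k + 1) - 1) * π ^ (2 * (k + 1)) *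
        (bernoulli (2 * (k + 1)) : ℝ) / (Nat.factorial (2 * (k + 1)) : ℝ)) := by
    intro k
    have h11 := hasSum_zeta_nat (k := k + 1) (Nat.succ_ne_zero k)
    have h12 := (hasSum_nat_add_iff'
      (f := fun n : ℕ => 1 / (n : ℝ) ^ (2 * (k + 1))) 1).mpr h11
    simp only [Finset.range_one, Finset.sum_singleton, Nat.cast_zero,
      zero_pow (by omega : 2 * (k + 1) ≠ 0), div_zero, sub_zero] at h12
    refine HasSum.congr_fun h12 fun j => ?_
    push_cast
    ring
  -- fiberwise sums over j, for each k
  have h2 : ∀ k : ℕ, HasSum (fun j : ℕ => a (j, k))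
      (((-1 : ℝ) ^ k * c ^ (k + 1) / ((k : ℝ) + 1)) *
        ((-1 : ℝ) ^ (k + 1 + 1) * (2 : ℝ) ^ (2 * (k + 1) - 1) * π ^ (2 * (k + 1)) *
          (bernoulli (2 * (k + 1)) : ℝ) / (Nat.factorial (2 * (k + 1)) : ℝ))) := by
    intro k
    have h13 := (hz' k).mul_left ((-1 : ℝ) ^ k * c ^ (k + 1) / ((k : ℝ) + 1))
    refine HasSum.congr_fun h13 fun j => ?_
    rw [ha_def]
    simp only
    rw [ht_def]
    simp only
    have hfib : ∀ C u : ℝ, u ≠ 0 →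
        (-1 : ℝ) ^ k * (C / u ^ 2) ^ (k + 1) / ((k : ℝ) + 1)
        = ((-1 : ℝ) ^ k * C ^ (k + 1) / ((k : ℝ) + 1)) * (1 / u ^ (2 * (k + 1))) := by
      intro C u hu
      rw [div_pow, ← pow_mul]
      ring
    exact hfib c ((j : ℝ) + 1) (by positivity)
  have hfinal := hA'.prod_fiberwise h2
  -- identify the limit value
  have hexp1 : (1 : ℝ) - Real.exp (-x) ≠ 0 := by
    intro h
    have h' : Real.exp (-x) = 1 := by linarith
    rw [Real.exp_eq_one_iff] at h'
    exact hx0 (by linarith)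
  have hA0 : x / (1 - Real.exp (-x)) ≠ 0 := div_ne_zero hx0 hexp1
  have hsh : Real.sinh y ≠ 0 := Real.sinh_ne_zero.mpr hy
  have hkey : x / (1 - Real.exp (-x)) * Real.exp (-(x / 2)) = y / Real.sinh y := by
    rw [hy_def, Real.sinh_eq]
    have h20 : Real.exp (x / 2) * Real.exp (-(x / 2)) = 1 := by
      rw [← Real.exp_add]; simp
    have h21 : Real.exp (-x) = Real.exp (-(x / 2)) * Real.exp (-(x / 2)) := by
      rw [← Real.exp_add]; ring_nf
    have hsh' : Real.exp (x / 2) - Real.exp (-(x / 2)) ≠ 0 := by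
      have h23 := hsh
      rw [hy_def, Real.sinh_eq] at h23
      intro h
      exact h23 (by rw [h, zero_div])
    have hd : 1 - Real.exp (-x)
        = Real.exp (-(x / 2)) * (Real.exp (x / 2) - Real.exp (-(x / 2))) := by
      rw [mul_sub, mul_comm (Real.exp (-(x / 2))) (Real.exp (x / 2)), h20, ← h21]
    rw [hd]
    field_simp
  have hval2 : -(Real.log (x / (1 - Real.exp (-x))) - x / 2) = L := by
    have h22 : Real.log (x / (1 - Real.exp (-x))) - x / 2
        = Real.log (y / Real.sinh y) := by
      rw [← hkey, Real.log_mul hA0 (Real.exp_ne_zero _), Real.log_exp]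
      ring
    rw [h22, hL_def, ← inv_div y (Real.sinh y), Real.log_inv]
  have hterm : ∀ k : ℕ,
      ((bernoulli (2 * (k + 1)) : ℝ)
          / ((2 * ((k : ℝ) + 1)) * (Nat.factorial (2 * (k + 1)) : ℝ)))
        * x ^ (2 * (k + 1))
      = ((-1 : ℝ) ^ k * c ^ (k + 1) / ((k : ℝ) + 1)) *
        ((-1 : ℝ) ^ (k + 1 + 1) * (2 : ℝ) ^ (2 * (k + 1) - 1) * π ^ (2 * (k + 1)) *
          (bernoulli (2 * (k + 1)) : ℝ) / (Nat.factorial (2 * (k + 1)) : ℝ)) := by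
    intro k
    have hx2π : (x ^ 2 / (2 * π) ^ 2) ^ (k + 1)
        = x ^ (2 * k + 2) / (2 ^ (2 * k + 2) * π ^ (2 * k + 2)) := by
      rw [div_pow, ← pow_mul, ← pow_mul, mul_pow,
        show 2 * (k + 1) = 2 * k + 2 from by omega]
    have e1 : 2 * (k + 1) - 1 = 2 * k + 1 := by omega
    have e2 : 2 * (k + 1) = 2 * k + 2 := by omega
    rw [hc_def, e1, e2, hx2π]
    have hF : ((2 * k + 2).factorial : ℝ) ≠ 0 := Nat.cast_ne_zero.mpr (Nat.factorial_ne_zero _)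
    have hk1 : ((k : ℝ) + 1) ≠ 0 := by positivity
    have hπ' : (π : ℝ) ≠ 0 := hπ.ne'
    rcases Nat.even_or_odd k with hk | hk
    · rw [hk.neg_one_pow, (by rcases hk with ⟨m, hm⟩; exact ⟨m + 1, by omega⟩ : Even (k + 1 + 1)).neg_one_pow]
      field_simp
      ring
    · rw [hk.neg_one_pow, (by rcases hk with ⟨m, hm⟩; exact ⟨m + 1, by omega⟩ : Odd (k + 1 + 1)).neg_one_pow]
      field_simp
      ring
  rw [← hval2] at hfinal
  exact hfinal.congr_fun hterm
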